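/- If $\mathcal{V}$ is an antichain of subspaces of $\mathbb{F}_q^n$ (no subspace properly contained in another member), then $\sum_{V \in \mathcal{V}} 1/\qbinom{n}{\dim V}_q \leq 1$, where $\qbinom{n}{k}_q = \prod_{i=0}^{k-1} \frac{q^{n-i}-1}{q^{k-i}-1}$ is the Gaussian binomial coefficient. -/
import Mathlib


/-- The Gaussian (q-)binomial coefficient `[n choose k]_q` as a rational number. -/
def qbinom (q n k : ℕ) : ℚ :=
  ∏ i ∈ Finset.range k, ((q : ℚ) ^ (n - i) - 1) / ((q : ℚ) ^ (k - i) - 1)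

lemma card_li_mkQ {F M : Type*} [Field F] [AddCommGroup M] [Module F M]
    (V : Submodule F M) (m : ℕ) :
    Nat.card {t : Fin m → M // LinearIndependent F (V.mkQ ∘ t)} =
      Nat.card ((Fin m → V) × {w : Fin m → (M ⧸ V) // LinearIndependent F w}) := by
  obtain ⟨σ, hσ⟩ := (V.mkQ).exists_rightInverse_of_surjective V.range_mkQ
  have hσ' : ∀ x, V.mkQ (σ x) = x := fun x => by
    have := LinearMap.ext_iff.1 hσ x
    simpa using this
  refine Nat.card_congr ⟨fun t => (fun j => ⟨t.1 j - σ (V.mkQ (t.1 j)), ?_⟩,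
      ⟨V.mkQ ∘ t.1, t.2⟩),
    fun p => ⟨fun j => (p.1 j : M) + σ (p.2.1 j), ?_⟩, ?_, ?_⟩
  · refine (Submodule.Quotient.mk_eq_zero V).1 ?_
    show V.mkQ _ = 0
    rw [map_sub, hσ', sub_self]
  · have : V.mkQ ∘ (fun j => (p.1 j : M) + σ (p.2.1 j)) = p.2.1 := by
      funext j
      show V.mkQ _ = _
      rw [map_add, hσ']
      have : V.mkQ (p.1 j : M) = 0 := (Submodule.Quotient.mk_eq_zero V).2 (p.1 j).2
      rw [this, zero_add]
    rw [this]; exact p.2.2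
  · intro t
    ext j
    simp
  · intro p
    have h0 : ∀ j, V.mkQ ((p.1 j : M) + σ (p.2.1 j)) = p.2.1 j := by
      intro j
      have : V.mkQ (p.1 j : M) = 0 := (Submodule.Quotient.mk_eq_zero V).2 (p.1 j).2
      rw [map_add, hσ', this, zero_add]
    refine Prod.ext (funext fun j => ?_) (Subtype.ext (funext fun j => ?_))
    · ext
      simp [h0 j]
    · exact h0 j

lemma li_sum_iff {F M : Type*} [Field F] [AddCommGroup M] [Module F M]
    {k m : ℕ} (V : Submodule F M) [FiniteDimensional F V]
    (hV : Module.finrank F V = k) (s : Fin k → V) (y : Fin m → M) :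
    LinearIndependent F (Sum.elim (fun j => (s j : M)) y) ↔
      LinearIndependent F s ∧ LinearIndependent F (V.mkQ ∘ y) := by
  have hx : (fun j => (s j : M)) = V.subtype ∘ s := rfl
  have hxiff : LinearIndependent F (fun j => (s j : M)) ↔ LinearIndependent F s := by
    rw [hx]; exact (V.subtype).linearIndependent_iff V.ker_subtype
  have hspan : LinearIndependent F s →
      Submodule.span F (Set.range (fun j => (s j : M))) = V := by
    intro hs
    have htop : Submodule.span F (Set.range s) = ⊤ :=
      hs.span_eq_top_of_card_eq_finrank' (by simp [hV])
    rw [hx, Set.range_comp, ← Submodule.map_span, htop, Submodule.map_top,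
      Submodule.range_subtype]
  rw [linearIndependent_sum]
  simp only [Sum.elim_comp_inl, Sum.elim_comp_inr]
  constructor
  · rintro ⟨h1, h2, h3⟩
    have hs := hxiff.1 h1
    refine ⟨hs, h2.map ?_⟩
    rw [V.ker_mkQ, ← hspan hs]
    exact h3.symm
  · rintro ⟨hs, hw⟩
    refine ⟨hxiff.2 hs, hw.of_comp _, ?_⟩
    rw [hspan hs]
    rw [Submodule.disjoint_def]
    intro x hxV hxs
    obtain ⟨c, hc⟩ := (Submodule.mem_span_range_iff_exists_fun F).1 hxs
    have h0 : ∑ j, c j • (V.mkQ ∘ y) j = 0 := by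
      have : V.mkQ x = 0 := (Submodule.Quotient.mk_eq_zero V).2 hxV
      calc ∑ j, c j • (V.mkQ ∘ y) j = V.mkQ (∑ j, c j • y j) := by
            rw [map_sum]; simp
        _ = 0 := by rw [hc, this]
    have hc0 : ∀ j, c j = 0 := Fintype.linearIndependent_iff.1 hw c h0
    rw [← hc, Finset.sum_eq_zero fun j _ => by rw [hc0 j, zero_smul]]

lemma card_AV {F M : Type*} [Field F] [Fintype F] [AddCommGroup M] [Module F M] [Finite M]
    {q n k : ℕ} (hq : Fintype.card F = q) (hn : Module.finrank F M = n)
    (V : Submodule F M) (hV : Module.finrank F V = k) (hk : k ≤ n) :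
    Nat.card {b : Fin n → M // LinearIndependent F b ∧ ∀ i : Fin n, (i : ℕ) < k → b i ∈ V} =
      (∏ i ∈ Finset.range k, (q ^ k - q ^ i)) * (q ^ (k * (n - k)) *
        ∏ j ∈ Finset.range (n - k), (q ^ (n - k) - q ^ j)) := by
  have hfinQ : Finite (M ⧸ V) := Quotient.finite _
  set m := n - k with hm
  have hkm : k + m = n := by omega
  let ρ : Fin k ⊕ Fin m ≃ Fin n := finSumFinEquiv.trans (finCongr hkm)
  have hρl : ∀ j : Fin k, ((ρ (Sum.inl j)) : ℕ) = (j : ℕ) := fun j => rfl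
  have E1 : {b : Fin n → M // LinearIndependent F b ∧ ∀ i : Fin n, (i : ℕ) < k → b i ∈ V} ≃
      {v : Fin k ⊕ Fin m → M // LinearIndependent F v ∧ ∀ j : Fin k, v (Sum.inl j) ∈ V} := by
    refine (Equiv.arrowCongr ρ.symm (Equiv.refl M)).subtypeEquiv (fun b => ?_)
    have hb : (Equiv.arrowCongr ρ.symm (Equiv.refl M)) b = b ∘ ρ := by
      funext x; simp [Equiv.arrowCongr]
    rw [hb]
    constructor
    · rintro ⟨h1, h2⟩
      exact ⟨(linearIndependent_equiv ρ).2 h1, fun j => h2 _ (by rw [hρl j]; exact j.2)⟩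
    · rintro ⟨h1, h2⟩
      refine ⟨(linearIndependent_equiv ρ).1 h1, fun i hi => ?_⟩
      have hieq : i = ρ (Sum.inl ⟨(i : ℕ), hi⟩) := Fin.ext (by rw [hρl])
      rw [hieq]; exact h2 _
  have E2 : {v : Fin k ⊕ Fin m → M // LinearIndependent F v ∧ ∀ j : Fin k, v (Sum.inl j) ∈ V} ≃
      {p : (Fin k → M) × (Fin m → M) //
        LinearIndependent F (Sum.elim p.1 p.2) ∧ ∀ j : Fin k, p.1 j ∈ V} := by
    refine (Equiv.sumArrowEquivProdArrow _ _ M).subtypeEquiv (fun v => ?_)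
    have hv : (Equiv.sumArrowEquivProdArrow _ _ M) v = (v ∘ Sum.inl, v ∘ Sum.inr) := rfl
    rw [hv, Sum.elim_comp_inl_inr]
    exact Iff.rfl
  have E3 : {p : (Fin k → M) × (Fin m → M) //
        LinearIndependent F (Sum.elim p.1 p.2) ∧ ∀ j : Fin k, p.1 j ∈ V} ≃
      {p : (Fin k → V) × (Fin m → M) //
        LinearIndependent F (Sum.elim (fun j => ((p.1 j : M))) p.2)} :=
    { toFun := fun p => ⟨((fun j => ⟨p.1.1 j, p.2.2 j⟩), p.1.2), p.2.1⟩
      invFun := fun p => ⟨((fun j => (p.1.1 j : M)), p.1.2), p.2, fun j => (p.1.1 j).2⟩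
      left_inv := fun p => rfl
      right_inv := fun p => rfl }
  have E4 : {p : (Fin k → V) × (Fin m → M) //
        LinearIndependent F (Sum.elim (fun j => ((p.1 j : M))) p.2)} ≃
      {p : (Fin k → V) × (Fin m → M) //
        LinearIndependent F p.1 ∧ LinearIndependent F (V.mkQ ∘ p.2)} :=
    Equiv.subtypeEquivRight (fun p => li_sum_iff V hV p.1 p.2)
  have E5 := Equiv.subtypeProdEquivProd (p := fun s : Fin k → V => LinearIndependent F s)
      (q := fun t : Fin m → M => LinearIndependent F (V.mkQ ∘ t))
  rw [Nat.card_congr (((E1.trans E2).trans E3).trans (E4.trans E5)), Nat.card_prod,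
    card_li_mkQ, Nat.card_prod]
  have h1 : Nat.card {s : Fin k → V // LinearIndependent F s} =
      ∏ i ∈ Finset.range k, (q ^ k - q ^ i) := by
    rw [card_linearIndependent (by rw [hV]), hq, hV,
      Fin.prod_univ_eq_prod_range (fun i => q ^ k - q ^ i)]
  have hQ : Module.finrank F (M ⧸ V) = m := by
    have := Submodule.finrank_quotient_add_finrank V
    omega
  have h2 : Nat.card (Fin m → V) = q ^ (k * m) := by
    have hcV : Nat.card V = q ^ k := by
      have := Fintype.ofFinite V
      rw [Nat.card_eq_fintype_card, Module.card_eq_pow_finrank (K := F) (V := V), hq, hV]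
    rw [Nat.card_fun, hcV, Nat.card_eq_fintype_card, Fintype.card_fin, ← pow_mul]
  have h3 : Nat.card {w : Fin m → (M ⧸ V) // LinearIndependent F w} =
      ∏ j ∈ Finset.range m, (q ^ m - q ^ j) := by
    rw [card_linearIndependent (by rw [hQ]), hq, hQ,
      Fin.prod_univ_eq_prod_range (fun j => q ^ m - q ^ j)]
  rw [h1, h2, h3]

lemma qbinom_mul {q n k : ℕ} (hq : 2 ≤ q) (hk : k ≤ n) :
    ((∏ i ∈ Finset.range k, ((q:ℚ) ^ k - (q:ℚ) ^ i)) * ((q:ℚ) ^ (k * (n - k)) *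
      ∏ j ∈ Finset.range (n - k), ((q:ℚ) ^ (n - k) - (q:ℚ) ^ j))) * qbinom q n k
    = ∏ i ∈ Finset.range n, ((q:ℚ) ^ n - (q:ℚ) ^ i) := by
  have hx1 : (1:ℚ) < (q:ℚ) := by exact_mod_cast lt_of_lt_of_le one_lt_two hq
  have step1 : ∀ i ∈ Finset.range k,
      ((q:ℚ) ^ k - (q:ℚ) ^ i) * (((q:ℚ) ^ (n - i) - 1) / ((q:ℚ) ^ (k - i) - 1))
        = (q:ℚ) ^ n - (q:ℚ) ^ i := by
    intro i hi
    have hik : i < k := Finset.mem_range.1 hi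
    have e1 : (q:ℚ) ^ i * (q:ℚ) ^ (k - i) = (q:ℚ) ^ k := by rw [← pow_add]; congr 1; omega
    have e2 : (q:ℚ) ^ i * (q:ℚ) ^ (n - i) = (q:ℚ) ^ n := by rw [← pow_add]; congr 1; omega
    have hgt : (1:ℚ) < (q:ℚ) ^ (k - i) := one_lt_pow₀ hx1 (by omega)
    have hne : (q:ℚ) ^ (k - i) - 1 ≠ 0 := by linarith
    rw [mul_div_assoc', div_eq_iff hne, ← e1, ← e2]
    ring
  have step2 : ∀ j ∈ Finset.range (n - k),
      (q:ℚ) ^ k * ((q:ℚ) ^ (n - k) - (q:ℚ) ^ j) = (q:ℚ) ^ n - (q:ℚ) ^ (k + j) := by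
    intro j hj
    rw [mul_sub, ← pow_add, ← pow_add]
    congr 2
    omega
  calc ((∏ i ∈ Finset.range k, ((q:ℚ) ^ k - (q:ℚ) ^ i)) * ((q:ℚ) ^ (k * (n - k)) *
      ∏ j ∈ Finset.range (n - k), ((q:ℚ) ^ (n - k) - (q:ℚ) ^ j))) * qbinom q n k
      = (∏ i ∈ Finset.range k,
          (((q:ℚ) ^ k - (q:ℚ) ^ i) * (((q:ℚ) ^ (n - i) - 1) / ((q:ℚ) ^ (k - i) - 1)))) *
        ∏ j ∈ Finset.range (n - k), ((q:ℚ) ^ k * ((q:ℚ) ^ (n - k) - (q:ℚ) ^ j)) := by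
        simp only [qbinom]
        rw [Finset.prod_mul_distrib, Finset.prod_mul_distrib, Finset.prod_const,
          Finset.card_range, ← pow_mul]
        ring
    _ = (∏ i ∈ Finset.range k, ((q:ℚ) ^ n - (q:ℚ) ^ i)) *
        ∏ j ∈ Finset.range (n - k), ((q:ℚ) ^ n - (q:ℚ) ^ (k + j)) := by
        rw [Finset.prod_congr rfl step1, Finset.prod_congr rfl step2]
    _ = ∏ i ∈ Finset.range (k + (n - k)), ((q:ℚ) ^ n - (q:ℚ) ^ i) :=
        (Finset.prod_range_add _ k (n - k)).symm
    _ = ∏ i ∈ Finset.range n, ((q:ℚ) ^ n - (q:ℚ) ^ i) := by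
        have hkn : k + (n - k) = n := by omega
        rw [hkn]

lemma span_first_eq {F M : Type*} [Field F] [AddCommGroup M] [Module F M]
    [FiniteDimensional F M] {n k : ℕ} (V : Submodule F M)
    (hV : Module.finrank F V = k) (hk : k ≤ n) (b : Fin n → M)
    (hb : LinearIndependent F b) (hbV : ∀ i : Fin n, (i : ℕ) < k → b i ∈ V) :
    Submodule.span F (Set.range (fun j : Fin k => b ⟨(j : ℕ), lt_of_lt_of_le j.2 hk⟩)) = V := by
  refine Submodule.eq_of_le_of_finrank_le ?_ ?_
  · rw [Submodule.span_le]
    rintro x ⟨j, rfl⟩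
    exact hbV _ j.2
  · have hli : LinearIndependent F (fun j : Fin k => b ⟨(j : ℕ), lt_of_lt_of_le j.2 hk⟩) :=
      hb.comp _ (fun a a' haa => Fin.ext (by simpa using congrArg Fin.val haa))
    rw [finrank_span_eq_card hli, Fintype.card_fin, hV]

lemma le_of_conds {F : Type*} [Field F] [Fintype F] {n : ℕ}
    (V V' : Submodule F (Fin n → F)) (b : Fin n → (Fin n → F))
    (hb : LinearIndependent F b)
    (hbV : ∀ i : Fin n, (i : ℕ) < Module.finrank F V → b i ∈ V)
    (hbV' : ∀ i : Fin n, (i : ℕ) < Module.finrank F V' → b i ∈ V')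
    (hle : Module.finrank F V ≤ Module.finrank F V') : V ≤ V' := by
  have hfr : Module.finrank F (Fin n → F) = n := by
    rw [Module.finrank_fintype_fun_eq_card, Fintype.card_fin]
  have hk : Module.finrank F V ≤ n := le_trans (Submodule.finrank_le V) (le_of_eq hfr)
  have hk' : Module.finrank F V' ≤ n := le_trans (Submodule.finrank_le V') (le_of_eq hfr)
  rw [← span_first_eq V rfl hk b hb hbV, ← span_first_eq V' rfl hk' b hb hbV']
  refine Submodule.span_mono ?_
  rintro x ⟨j, rfl⟩
  exact ⟨⟨(j : ℕ), lt_of_lt_of_le j.2 hle⟩, rfl⟩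

lemma cast_prod_sub {q : ℕ} (hq : 1 ≤ q) (a : ℕ) :
    ((∏ i ∈ Finset.range a, (q ^ a - q ^ i) : ℕ) : ℚ) =
      ∏ i ∈ Finset.range a, ((q:ℚ) ^ a - (q:ℚ) ^ i) := by
  rw [Nat.cast_prod]
  refine Finset.prod_congr rfl fun i hi => ?_
  have hle : q ^ i ≤ q ^ a := Nat.pow_le_pow_right hq (le_of_lt (Finset.mem_range.1 hi))
  rw [Nat.cast_sub hle, Nat.cast_pow, Nat.cast_pow]

/-- The q-analogue LYM inequality for antichains of subspaces of `𝔽_q^n`. -/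
theorem q_lym (q n : ℕ) (F : Type*) [Field F] [Fintype F]
    (hq : Fintype.card F = q) (𝒱 : Finset (Submodule F (Fin n → F)))
    (h : IsAntichain (· ≤ ·) (𝒱 : Set (Submodule F (Fin n → F)))) :
    ∑ V ∈ 𝒱, 1 / qbinom q n (Module.finrank F V) ≤ 1 := by
  classical
  have hq2 : 2 ≤ q := hq ▸ Fintype.one_lt_card
  have hq1 : 1 ≤ q := le_trans one_le_two hq2
  have hx1 : (1:ℚ) < (q:ℚ) := by exact_mod_cast lt_of_lt_of_le one_lt_two hq2
  have hfr : Module.finrank F (Fin n → F) = n := by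
    rw [Module.finrank_fintype_fun_eq_card, Fintype.card_fin]
  -- the total number of linearly independent n-tuples
  have hNcard : Nat.card {b : Fin n → (Fin n → F) // LinearIndependent F b} =
      ∏ i ∈ Finset.range n, (q ^ n - q ^ i) := by
    rw [card_linearIndependent (by rw [hfr]), hq, hfr,
      Fin.prod_univ_eq_prod_range (fun i => q ^ n - q ^ i)]
  have hNQ : ((Nat.card {b : Fin n → (Fin n → F) // LinearIndependent F b} : ℕ) : ℚ) =
      ∏ i ∈ Finset.range n, ((q:ℚ) ^ n - (q:ℚ) ^ i) := by
    rw [hNcard, cast_prod_sub hq1]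
  have hPQpos : (0:ℚ) < ∏ i ∈ Finset.range n, ((q:ℚ) ^ n - (q:ℚ) ^ i) := by
    refine Finset.prod_pos fun i hi => sub_pos.2 ?_
    exact pow_lt_pow_right₀ hx1 (Finset.mem_range.1 hi)
  have hNpos : (0:ℚ) < (Nat.card {b : Fin n → (Fin n → F) // LinearIndependent F b} : ℚ) := by
    rw [hNQ]; exact hPQpos
  -- per-subspace identity
  have hterm : ∀ V ∈ 𝒱, 1 / qbinom q n (Module.finrank F V) =
      (Nat.card {b : Fin n → (Fin n → F) // LinearIndependent F b ∧
        ∀ i : Fin n, (i : ℕ) < Module.finrank F V → b i ∈ V} : ℚ) /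
      (Nat.card {b : Fin n → (Fin n → F) // LinearIndependent F b} : ℚ) := by
    intro V _
    have hkn : Module.finrank F V ≤ n := le_trans (Submodule.finrank_le V) (le_of_eq hfr)
    have hqbpos : 0 < qbinom q n (Module.finrank F V) := by
      refine Finset.prod_pos fun i hi => ?_
      have hik : i < Module.finrank F V := Finset.mem_range.1 hi
      refine div_pos (sub_pos.2 (one_lt_pow₀ hx1 (by omega))) (sub_pos.2 (one_lt_pow₀ hx1 (by omega)))
    have hcV := card_AV hq hfr V rfl hkn
    have key : (Nat.card {b : Fin n → (Fin n → F) // LinearIndependent F b ∧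
        ∀ i : Fin n, (i : ℕ) < Module.finrank F V → b i ∈ V} : ℚ) *
        qbinom q n (Module.finrank F V) =
        ∏ i ∈ Finset.range n, ((q:ℚ) ^ n - (q:ℚ) ^ i) := by
      rw [hcV, Nat.cast_mul, Nat.cast_mul, Nat.cast_pow, cast_prod_sub hq1, cast_prod_sub hq1]
      exact qbinom_mul hq2 hkn
    rw [div_eq_div_iff (ne_of_gt hqbpos) (ne_of_gt hNpos), one_mul, hNQ, ← key]
  -- the sum of the counts is at most the total count
  have hsum : ∑ V ∈ 𝒱, Nat.card {b : Fin n → (Fin n → F) // LinearIndependent F b ∧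
        ∀ i : Fin n, (i : ℕ) < Module.finrank F V → b i ∈ V} ≤
      Nat.card {b : Fin n → (Fin n → F) // LinearIndependent F b} := by
    rw [Nat.card_eq_fintype_card]
    have hinj : Function.Injective
        (fun x : Σ V : {x // x ∈ 𝒱}, {b : Fin n → (Fin n → F) // LinearIndependent F b ∧
            ∀ i : Fin n, (i : ℕ) < Module.finrank F (V : Submodule F (Fin n → F)) → b i ∈ (V : Submodule F (Fin n → F))} =>
          (⟨x.2.1, x.2.2.1⟩ : {b : Fin n → (Fin n → F) // LinearIndependent F b})) := by
      rintro ⟨⟨V, hVm⟩, ⟨b, hb⟩⟩ ⟨⟨V', hVm'⟩, ⟨b', hb'⟩⟩ heq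
      have hbb : b = b' := congrArg Subtype.val heq
      subst hbb
      have hVV' : V = V' := by
        rcases le_total (Module.finrank F V) (Module.finrank F V') with hle | hle
        · by_contra hne
          exact h hVm hVm' hne (le_of_conds V V' b hb.1 hb.2 hb'.2 hle)
        · by_contra hne
          exact h hVm' hVm (Ne.symm hne) (le_of_conds V' V b hb.1 hb'.2 hb.2 hle)
      subst hVV'
      rfl
    calc ∑ V ∈ 𝒱, Nat.card {b : Fin n → (Fin n → F) // LinearIndependent F b ∧
          ∀ i : Fin n, (i : ℕ) < Module.finrank F V → b i ∈ V}
        = ∑ V : {x // x ∈ 𝒱}, Nat.card {b : Fin n → (Fin n → F) // LinearIndependent F b ∧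
          ∀ i : Fin n, (i : ℕ) < Module.finrank F (V : Submodule F (Fin n → F)) → b i ∈ (V : Submodule F (Fin n → F))} :=
          (Finset.sum_coe_sort 𝒱 _).symm
      _ = ∑ V : {x // x ∈ 𝒱}, Fintype.card {b : Fin n → (Fin n → F) // LinearIndependent F b ∧
          ∀ i : Fin n, (i : ℕ) < Module.finrank F (V : Submodule F (Fin n → F)) → b i ∈ (V : Submodule F (Fin n → F))} := by
          exact Finset.sum_congr rfl fun V _ => Nat.card_eq_fintype_card
      _ = Fintype.card (Σ V : {x // x ∈ 𝒱}, {b : Fin n → (Fin n → F) // LinearIndependent F b ∧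
          ∀ i : Fin n, (i : ℕ) < Module.finrank F (V : Submodule F (Fin n → F)) → b i ∈ (V : Submodule F (Fin n → F))}) :=
          (Fintype.card_sigma).symm
      _ ≤ Fintype.card {b : Fin n → (Fin n → F) // LinearIndependent F b} :=
          Fintype.card_le_of_injective _ hinj
  calc ∑ V ∈ 𝒱, 1 / qbinom q n (Module.finrank F V)
      = ∑ V ∈ 𝒱, (Nat.card {b : Fin n → (Fin n → F) // LinearIndependent F b ∧
          ∀ i : Fin n, (i : ℕ) < Module.finrank F V → b i ∈ V} : ℚ) /
        (Nat.card {b : Fin n → (Fin n → F) // LinearIndependent F b} : ℚ) :=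
        Finset.sum_congr rfl hterm
    _ = ((∑ V ∈ 𝒱, Nat.card {b : Fin n → (Fin n → F) // LinearIndependent F b ∧
          ∀ i : Fin n, (i : ℕ) < Module.finrank F V → b i ∈ V} : ℕ) : ℚ) /
        (Nat.card {b : Fin n → (Fin n → F) // LinearIndependent F b} : ℚ) := by
        rw [← Finset.sum_div, Nat.cast_sum]
    _ ≤ 1 := by
        rw [div_le_one hNpos]
        exact_mod_cast hsum
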